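/- Let F : {0,…,2^n − 1} → {0,…,2^n − 1} be F = G_{2m+1} ∘ ⋯ ∘ G_1, where G_{2i}(x) = x ⊕ α_i for i = 1,…,m and G_{2i+1}(x) = (x + β_i) mod 2^n for i = 0,…,m, with α_i, β_i ∈ {0,…,2^n − 1}. If F(x) = x ⊕ γ for all x and some fixed γ, then γ ≡ α_1 ⊕ ⋯ ⊕ α_m (mod 2^{n−1}). -/

import Mathlib

/-- The alternating composition
`F = G_{2m+1} ∘ ⋯ ∘ G_1` with `G_{2i}(x) = x ⊕ α_i` (`i = 1,…,m`) and
`G_{2i+1}(x) = (x + β_i) mod 2^n` (`i = 0,…,m`): first add `β 0`, then for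
`i = 1,…,m` XOR `α i` and add `β i`. -/
def altComp (n m : ℕ) (α β : ℕ → ℕ) : ℕ → ℕ :=
  (List.range m).foldl
    (fun f i => fun x => ((f x ^^^ α (i + 1)) + β (i + 1)) % 2 ^ n)
    (fun x => (x + β 0) % 2 ^ n)

/-- XOR of `α 1, …, α m`. -/
def xorA (α : ℕ → ℕ) (m : ℕ) : ℕ :=
  ((List.range m).map (fun i => α (i + 1))).foldr (· ^^^ ·) 0

lemma foldr_xor_init (L : List ℕ) (a : ℕ) :
    L.foldr (· ^^^ ·) a = L.foldr (· ^^^ ·) 0 ^^^ a := by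
  induction L with
  | nil => simp
  | cons h t ih => simp [ih, Nat.xor_assoc]

@[simp] lemma xorA_zero (α : ℕ → ℕ) : xorA α 0 = 0 := rfl

lemma xorA_succ (α : ℕ → ℕ) (m : ℕ) : xorA α (m + 1) = xorA α m ^^^ α (m + 1) := by
  unfold xorA
  rw [List.range_succ, List.map_append, List.foldr_append]
  simp only [List.map_cons, List.map_nil, List.foldr_cons, List.foldr_nil, Nat.xor_zero]
  exact foldr_xor_init _ _

lemma altComp_zero (n : ℕ) (α β : ℕ → ℕ) (x : ℕ) :
    altComp n 0 α β x = (x + β 0) % 2 ^ n := rfl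

lemma altComp_succ (n m : ℕ) (α β : ℕ → ℕ) (x : ℕ) :
    altComp n (m + 1) α β x
      = ((altComp n m α β x ^^^ α (m + 1)) + β (m + 1)) % 2 ^ n := by
  unfold altComp
  rw [List.range_succ, List.foldl_append]
  rfl

lemma altComp_lt (n m : ℕ) (α β : ℕ → ℕ) (x : ℕ) :
    altComp n m α β x < 2 ^ n := by
  cases m with
  | zero => exact Nat.mod_lt _ (Nat.two_pow_pos n)
  | succ m => rw [altComp_succ]; exact Nat.mod_lt _ (Nat.two_pow_pos n)

lemma xor_lt_two_pow' {x y n : ℕ} (hx : x < 2 ^ n) (hy : y < 2 ^ n) :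
    x ^^^ y < 2 ^ n := by
  apply Nat.lt_pow_two_of_testBit
  intro i hi
  have hx' : x < 2 ^ i := lt_of_lt_of_le hx (Nat.pow_le_pow_right (by norm_num) hi)
  have hy' : y < 2 ^ i := lt_of_lt_of_le hy (Nat.pow_le_pow_right (by norm_num) hi)
  simp [Nat.testBit_xor, Nat.testBit_lt_two_pow hx', Nat.testBit_lt_two_pow hy']

lemma xor_left_cancel' {a b c : ℕ} (h : a ^^^ b = a ^^^ c) : b = c := by
  have := congrArg (fun z => a ^^^ z) h
  simpa [← Nat.xor_assoc, Nat.xor_self, Nat.zero_xor] using this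

lemma xor_mod_two_pow (a b j : ℕ) :
    (a ^^^ b) % 2 ^ j = a % 2 ^ j ^^^ b % 2 ^ j := by
  apply Nat.eq_of_testBit_eq
  intro i
  simp only [Nat.testBit_mod_two_pow, Nat.testBit_xor]
  cases h : decide (i < j) <;> simp

lemma div_pow_mod_two (x d : ℕ) :
    x / 2 ^ d % 2 = if x.testBit d then 1 else 0 := by
  rw [Nat.testBit_eq_decide_div_mod_eq]
  rcases Nat.mod_two_eq_zero_or_one (x / 2 ^ d) with h | h <;> simp [h]

lemma xor_bit (d x y : ℕ) :
    (x ^^^ y) / 2 ^ d % 2 = (x / 2 ^ d % 2 + y / 2 ^ d % 2) % 2 := by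
  rw [div_pow_mod_two, div_pow_mod_two, div_pow_mod_two, Nat.testBit_xor]
  cases hx : x.testBit d <;> cases hy : y.testBit d <;> simp

lemma xor_split (d t u l : ℕ) (hl : l < 2 ^ d) :
    (2 ^ d * t + l) ^^^ (2 ^ d * u) = 2 ^ d * (t ^^^ u) + l := by
  apply Nat.eq_of_testBit_eq
  intro j
  rw [Nat.testBit_xor, Nat.testBit_two_pow_mul_add _ hl,
    Nat.testBit_two_pow_mul_add _ hl, Nat.testBit_two_pow_mul]
  by_cases h : j < d
  · simp [h, Nat.not_le_of_lt h]
  · simp [h, Nat.le_of_not_lt h, Nat.testBit_xor]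

lemma mod_split (d X e : ℕ) (he : e < 2 ^ d) :
    (2 ^ d * X + e) % 2 ^ (d + 2) = 2 ^ d * (X % 4) + e := by
  have hp : 0 < 2 ^ d := Nat.two_pow_pos d
  have h4 : (2 : ℕ) ^ (d + 2) = 2 ^ d * 4 := by ring
  have hX : X % 4 < 4 := Nat.mod_lt _ (by norm_num)
  have hlt : 2 ^ d * (X % 4) + e < 2 ^ d * 4 := by nlinarith
  rw [h4, Nat.add_mod, Nat.mul_mod_mul_left,
    Nat.mod_eq_of_lt (lt_of_lt_of_le he (by nlinarith)), Nat.mod_eq_of_lt hlt]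

lemma div_split (d X e : ℕ) (he : e < 2 ^ d) :
    (2 ^ d * X + e) / 2 ^ d = X := by
  rw [Nat.mul_add_div (Nat.two_pow_pos d), Nat.div_eq_of_lt he]
  omega

lemma core : ∀ t < 4, ∀ b < 4, ∀ c < 2, ∀ s < 2,
    ((t ^^^ (1 + 2 * s)) + b + c) % 4
      = ((t + b + c) % 4) ^^^ (1 + 2 * ((s + t + (t + b + c) % 4) % 2)) := by
  decide

/-- The key single-addition step: adding `β` mod `2^(d+2)` to `v ^^^ 2^d·(1+2s)`
flips bit `d` and changes bit `d+1` in a controlled way. -/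
lemma step (d β v s : ℕ) (hβ : β < 2 ^ (d + 2)) (hv : v < 2 ^ (d + 2)) (hs : s < 2) :
    ((v ^^^ 2 ^ d * (1 + 2 * s)) + β) % 2 ^ (d + 2)
      = ((v + β) % 2 ^ (d + 2))
          ^^^ 2 ^ d * (1 + 2 * ((s + v / 2 ^ d + ((v + β) % 2 ^ (d + 2)) / 2 ^ d) % 2)) := by
  have hp : 0 < 2 ^ d := Nat.two_pow_pos d
  have h4 : (2 : ℕ) ^ (d + 2) = 2 ^ d * 4 := by ring
  obtain ⟨t, l, hvt, hld, hveq⟩ : ∃ t l, t < 4 ∧ l < 2 ^ d ∧ v = 2 ^ d * t + l :=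
    ⟨v / 2 ^ d, v % 2 ^ d, by rw [Nat.div_lt_iff_lt_mul hp]; omega,
      Nat.mod_lt _ hp, (Nat.div_add_mod v (2 ^ d)).symm⟩
  obtain ⟨b, r, hbt, hrd, hbeq⟩ : ∃ b r, b < 4 ∧ r < 2 ^ d ∧ β = 2 ^ d * b + r :=
    ⟨β / 2 ^ d, β % 2 ^ d, by rw [Nat.div_lt_iff_lt_mul hp]; omega,
      Nat.mod_lt _ hp, (Nat.div_add_mod β (2 ^ d)).symm⟩
  obtain ⟨c, e, hcd, hed, hlr⟩ : ∃ c e, c < 2 ∧ e < 2 ^ d ∧ l + r = 2 ^ d * c + e := by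
    refine ⟨(l + r) / 2 ^ d, (l + r) % 2 ^ d, ?_, Nat.mod_lt _ hp,
      (Nat.div_add_mod _ _).symm⟩
    rw [Nat.div_lt_iff_lt_mul hp]; omega
  subst hveq hbeq
  have hdivv : (2 ^ d * t + l) / 2 ^ d = t := div_split d t l hld
  have g1 : (2 ^ d * t + l) ^^^ 2 ^ d * (1 + 2 * s)
      = 2 ^ d * (t ^^^ (1 + 2 * s)) + l := xor_split d t (1 + 2 * s) l hld
  have hsum : (2 ^ d * t + l) + (2 ^ d * b + r) = 2 ^ d * (t + b + c) + e := by
    have h' : (2 ^ d * t + l) + (2 ^ d * b + r) = 2 ^ d * (t + b) + (l + r) := by ring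
    rw [h', hlr]; ring
  have lhs1 : (2 ^ d * (t ^^^ (1 + 2 * s)) + l) + (2 ^ d * b + r)
      = 2 ^ d * ((t ^^^ (1 + 2 * s)) + b + c) + e := by
    have h' : (2 ^ d * (t ^^^ (1 + 2 * s)) + l) + (2 ^ d * b + r)
        = 2 ^ d * ((t ^^^ (1 + 2 * s)) + b) + (l + r) := by ring
    rw [h', hlr]; ring
  have w1 : ((2 ^ d * t + l) + (2 ^ d * b + r)) % 2 ^ (d + 2)
      = 2 ^ d * ((t + b + c) % 4) + e := by
    rw [hsum, mod_split d _ e hed]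
  have w2 : (2 ^ d * ((t + b + c) % 4) + e) / 2 ^ d = (t + b + c) % 4 :=
    div_split d _ e hed
  rw [g1, lhs1, mod_split d _ e hed, w1, w2, hdivv,
    xor_split d _ _ e hed, core t hvt b hbt c hcd s hs]

/-- Main invariant, by induction along the chain: flipping bit `d` of the input
flips bit `d` of the output and changes bit `d+1` by
`bit_d x + bit_d (F x) + bit_d (⊕ α)`. -/
lemma inv (d : ℕ) (α β : ℕ → ℕ) (hα : ∀ i, α i < 2 ^ (d + 2)) (hβ : ∀ i, β i < 2 ^ (d + 2)) :
    ∀ m, ∀ x, x < 2 ^ (d + 2) →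
      altComp (d + 2) m α β (x ^^^ 2 ^ d)
        = altComp (d + 2) m α β x
            ^^^ 2 ^ d * (1 + 2 * ((x / 2 ^ d + altComp (d + 2) m α β x / 2 ^ d
                + xorA α m / 2 ^ d) % 2)) := by
  intro m
  induction m with
  | zero =>
    intro x hx
    have h := step d (β 0) x 0 (hβ 0) hx (by norm_num)
    simp only [altComp_zero, xorA_zero, Nat.zero_div, Nat.add_zero, Nat.zero_add] at h ⊢
    simpa using h
  | succ m ih =>
    intro x hx
    rw [altComp_succ, altComp_succ, ih x hx]
    have hF : altComp (d + 2) m α β x < 2 ^ (d + 2) := altComp_lt _ _ _ _ _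
    set F := altComp (d + 2) m α β x with hFdef
    set s := (x / 2 ^ d + F / 2 ^ d + xorA α m / 2 ^ d) % 2 with hsdef
    have hxc : (F ^^^ 2 ^ d * (1 + 2 * s)) ^^^ α (m + 1)
        = (F ^^^ α (m + 1)) ^^^ 2 ^ d * (1 + 2 * s) := by
      rw [Nat.xor_assoc, Nat.xor_assoc, Nat.xor_comm (2 ^ d * (1 + 2 * s)) (α (m + 1))]
    rw [hxc]
    have hv : F ^^^ α (m + 1) < 2 ^ (d + 2) := xor_lt_two_pow' hF (hα (m + 1))
    have hs2 : s < 2 := Nat.mod_lt _ (by norm_num)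
    have h := step d (β (m + 1)) (F ^^^ α (m + 1)) s (hβ (m + 1)) hv hs2
    rw [h]
    have e1 := xor_bit d F (α (m + 1))
    have e2 : xorA α (m + 1) / 2 ^ d % 2
        = (xorA α m / 2 ^ d % 2 + α (m + 1) / 2 ^ d % 2) % 2 := by
      rw [xorA_succ]; exact xor_bit d _ _
    have hpar : (s + (F ^^^ α (m + 1)) / 2 ^ d
          + ((F ^^^ α (m + 1)) + β (m + 1)) % 2 ^ (d + 2) / 2 ^ d) % 2
        = (x / 2 ^ d + ((F ^^^ α (m + 1)) + β (m + 1)) % 2 ^ (d + 2) / 2 ^ d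
          + xorA α (m + 1) / 2 ^ d) % 2 := by
      omega
    rw [hpar]

lemma altComp_mod (n j m : ℕ) (hj : j ≤ n) (α β : ℕ → ℕ) (x : ℕ) :
    altComp n m α β x % 2 ^ j
      = altComp j m (fun i => α i % 2 ^ j) (fun i => β i % 2 ^ j) (x % 2 ^ j) := by
  have hdvd : (2 : ℕ) ^ j ∣ 2 ^ n := pow_dvd_pow 2 hj
  induction m with
  | zero =>
    rw [altComp_zero, altComp_zero, Nat.mod_mod_of_dvd _ hdvd, Nat.add_mod]
  | succ m ih =>
    rw [altComp_succ, altComp_succ, Nat.mod_mod_of_dvd _ hdvd, Nat.add_mod,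
      xor_mod_two_pow, ih]

lemma xorA_mod (α : ℕ → ℕ) (j m : ℕ) :
    xorA (fun i => α i % 2 ^ j) m = xorA α m % 2 ^ j := by
  induction m with
  | zero => simp
  | succ m ih => rw [xorA_succ, xorA_succ, ih, xor_mod_two_pow]

/-- Bit `k` of `γ` agrees with bit `k` of `⊕ α`, whenever `k + 2 ≤ n`. -/
lemma bit_eq (n m : ℕ) (α β : ℕ → ℕ) (γ : ℕ)
    (hF : ∀ x < 2 ^ n, altComp n m α β x = x ^^^ γ) (k : ℕ) (hk : k + 2 ≤ n) :
    γ / 2 ^ k % 2 = xorA α m / 2 ^ k % 2 := by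
  have hp : 0 < 2 ^ (k + 2) := Nat.two_pow_pos _
  have hle : (2 : ℕ) ^ (k + 2) ≤ 2 ^ n := Nat.pow_le_pow_right (by norm_num) hk
  have hF' : ∀ y, y < 2 ^ (k + 2) →
      altComp (k + 2) m (fun i => α i % 2 ^ (k + 2)) (fun i => β i % 2 ^ (k + 2)) y
        = y ^^^ γ % 2 ^ (k + 2) := by
    intro y hy
    have h1 := altComp_mod n (k + 2) m hk α β y
    rw [Nat.mod_eq_of_lt hy] at h1
    rw [← h1, hF y (lt_of_lt_of_le hy hle), xor_mod_two_pow, Nat.mod_eq_of_lt hy]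
  have hmain := inv k (fun i => α i % 2 ^ (k + 2)) (fun i => β i % 2 ^ (k + 2))
      (fun i => Nat.mod_lt _ hp) (fun i => Nat.mod_lt _ hp) m 0 hp
  rw [Nat.zero_xor] at hmain
  have h2k : (2 : ℕ) ^ k < 2 ^ (k + 2) :=
    Nat.pow_lt_pow_right (by norm_num) (by omega)
  rw [hF' _ h2k, hF' 0 hp, Nat.zero_xor] at hmain
  rw [Nat.xor_comm (2 ^ k) (γ % 2 ^ (k + 2))] at hmain
  have hcancel := xor_left_cancel' hmain
  have h1 : 2 ^ k * 1 = 2 ^ k * (1 + 2 * ((0 / 2 ^ k + γ % 2 ^ (k + 2) / 2 ^ k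
      + xorA (fun i => α i % 2 ^ (k + 2)) m / 2 ^ k) % 2)) := by
    rw [Nat.mul_one]; exact hcancel
  have h2 := Nat.eq_of_mul_eq_mul_left (Nat.two_pow_pos k) h1
  simp only [Nat.zero_div, Nat.zero_add] at h2
  have hγbit : γ % 2 ^ (k + 2) / 2 ^ k % 2 = γ / 2 ^ k % 2 := by
    rw [div_pow_mod_two, div_pow_mod_two, Nat.testBit_mod_two_pow]
    simp [show k < k + 2 by omega]
  have hAbit : xorA (fun i => α i % 2 ^ (k + 2)) m / 2 ^ k % 2
      = xorA α m / 2 ^ k % 2 := by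
    rw [xorA_mod, div_pow_mod_two, div_pow_mod_two, Nat.testBit_mod_two_pow]
    simp [show k < k + 2 by omega]
  omega

/-- If such an alternating composition satisfies `F(x) = x ⊕ γ` for all `x`,
then `γ ≡ α_1 ⊕ ⋯ ⊕ α_m (mod 2^{n-1})`. -/
theorem stmt_10 (n m : ℕ) (hn : 1 ≤ n) (hm : 1 ≤ m)
    (α β : ℕ → ℕ) (hα : ∀ i, α i < 2 ^ n) (hβ : ∀ i, β i < 2 ^ n)
    (γ : ℕ) (hγ : γ < 2 ^ n)
    (hF : ∀ x < 2 ^ n, altComp n m α β x = x ^^^ γ) :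
    γ % 2 ^ (n - 1) = (((List.range m).map (fun i => α (i + 1))).foldr (· ^^^ ·) 0) % 2 ^ (n - 1) := by
  have hxa : (((List.range m).map (fun i => α (i + 1))).foldr (· ^^^ ·) 0) = xorA α m := rfl
  rw [hxa]
  apply Nat.eq_of_testBit_eq
  intro i
  rw [Nat.testBit_mod_two_pow, Nat.testBit_mod_two_pow]
  by_cases hi : i < n - 1
  · have hk : i + 2 ≤ n := by omega
    have h := bit_eq n m α β γ hF i hk
    rw [div_pow_mod_two, div_pow_mod_two] at h
    have hbit : γ.testBit i = (xorA α m).testBit i := by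
      cases h1 : γ.testBit i <;> cases h2 : (xorA α m).testBit i <;>
        simp [h1, h2] at h ⊢
    rw [hbit]
  · simp [hi]
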